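/- Let |·| be a function on a field k satisfying |x| = 0 iff x = 0, |xy| = |x||y|, and |x + y| ≤ 2·max(|x|, |y|) for all x, y ∈ k. Then |·| satisfies the triangle inequality |x + y| ≤ |x| + |y|, i.e., it is an absolute value function. -/

import Mathlib

/-- If `|·|` on a field `k` is positive definite, multiplicative, and satisfies
`|x + y| ≤ 2 · max(|x|, |y|)`, then it satisfies the triangle inequality. -/
theorem stmt_7 {k : Type*} [Field k] (f : k → ℝ)
    (h_nonneg : ∀ x, 0 ≤ f x)
    (h_eq : ∀ x, f x = 0 ↔ x = 0)
    (h_mul : ∀ x y, f (x * y) = f x * f y)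
    (h_quasi : ∀ x y : k, f (x + y) ≤ 2 * max (f x) (f y)) :
    ∀ x y : k, f (x + y) ≤ f x + f y := by
  have hf0 : f 0 = 0 := (h_eq 0).mpr rfl
  have hf1 : f 1 = 1 := by
    have h := h_mul 1 1
    rw [one_mul] at h
    have h1 : f 1 ≠ 0 := fun h0 => one_ne_zero ((h_eq 1).mp h0)
    have h2 : f 1 * f 1 = f 1 * 1 := by rw [mul_one, ← h]
    exact mul_left_cancel₀ h1 h2
  have hpow : ∀ (x : k) (n : ℕ), f (x ^ n) = f x ^ n := by
    intro x n
    induction n with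
    | zero => simpa using hf1
    | succ n ih => rw [pow_succ, pow_succ, h_mul, ih]
  -- sums of 2^m terms
  have key2 : ∀ (m : ℕ) (a : ℕ → k) (B : ℝ), 0 ≤ B → (∀ i, f (a i) ≤ B) →
      f (∑ i ∈ Finset.range (2 ^ m), a i) ≤ 2 ^ m * B := by
    intro m
    induction m with
    | zero => intro a B hB ha; simpa using ha 0
    | succ m ih =>
      intro a B hB ha
      have hsplit : ∑ i ∈ Finset.range (2 ^ (m + 1)), a i
          = (∑ i ∈ Finset.range (2 ^ m), a i)
            + ∑ i ∈ Finset.range (2 ^ m), a (2 ^ m + i) := by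
        rw [pow_succ, mul_two, Finset.sum_range_add]
      rw [hsplit]
      have h1 := ih a B hB ha
      have h2 := ih (fun i => a (2 ^ m + i)) B hB (fun i => ha _)
      calc f _ ≤ 2 * max (f (∑ i ∈ Finset.range (2 ^ m), a i))
            (f (∑ i ∈ Finset.range (2 ^ m), a (2 ^ m + i))) := h_quasi _ _
        _ ≤ 2 * (2 ^ m * B) := by
            have : max (f (∑ i ∈ Finset.range (2 ^ m), a i))
                (f (∑ i ∈ Finset.range (2 ^ m), a (2 ^ m + i))) ≤ 2 ^ m * B :=
              max_le h1 h2
            linarith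
        _ = 2 ^ (m + 1) * B := by ring
  -- sums of n terms
  have keyn : ∀ (n : ℕ) (a : ℕ → k) (B : ℝ), 0 ≤ B → (∀ i, f (a i) ≤ B) →
      f (∑ i ∈ Finset.range n, a i) ≤ 2 * n * B := by
    intro n a B hB ha
    rcases Nat.eq_zero_or_pos n with hn | hn
    · subst hn; simp [hf0]
    obtain ⟨m, hm1, hm2⟩ : ∃ m : ℕ, n ≤ 2 ^ m ∧ 2 ^ m ≤ 2 * n := by
      rcases eq_or_lt_of_le (show 1 ≤ n from hn) with h1 | h1
      · exact ⟨0, by omega, by omega⟩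
      · refine ⟨Nat.clog 2 n, Nat.le_pow_clog one_lt_two n, ?_⟩
        have hc : 1 ≤ Nat.clog 2 n := Nat.clog_pos one_lt_two h1
        have h2 : 2 ^ (Nat.clog 2 n - 1) < n := Nat.pow_pred_clog_lt_self one_lt_two h1
        have h3 : 2 ^ Nat.clog 2 n = 2 * 2 ^ (Nat.clog 2 n - 1) := by
          conv_lhs => rw [show Nat.clog 2 n = (Nat.clog 2 n - 1) + 1 from by omega]
          rw [pow_succ]
          ring
        omega
    set a' : ℕ → k := fun i => if i < n then a i else 0 with ha'
    have hsum : ∑ i ∈ Finset.range (2 ^ m), a' i = ∑ i ∈ Finset.range n, a i := by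
      rw [← Finset.sum_subset (Finset.range_subset_range.mpr hm1)]
      · exact Finset.sum_congr rfl fun i hi => by
          simp [ha', Finset.mem_range.mp hi]
      · intro i _ hi
        simp only [ha']
        rw [if_neg (by simpa using hi)]
    have ha'' : ∀ i, f (a' i) ≤ B := by
      intro i
      by_cases h : i < n
      · simpa [ha', h] using ha i
      · simpa [ha', h, hf0] using hB
    have := key2 m a' B hB ha''
    rw [hsum] at this
    refine this.trans ?_
    have : (2 : ℝ) ^ m ≤ 2 * n := by exact_mod_cast hm2
    nlinarith
  -- f of natural casts
  have hnat : ∀ n : ℕ, f (n : k) ≤ 2 * n := by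
    intro n
    have : ((n : k)) = ∑ _i ∈ Finset.range n, (1 : k) := by simp
    rw [this]
    have := keyn n (fun _ => (1 : k)) 1 zero_le_one (fun _ => le_of_eq hf1)
    simpa using this
  -- key binomial estimate
  have hbin : ∀ (x y : k) (n : ℕ), f (x + y) ^ n ≤ 4 * (n + 1) * (f x + f y) ^ n := by
    intro x y n
    have hxy : (0 : ℝ) ≤ f x + f y := by
      have := h_nonneg x; have := h_nonneg y; linarith
    rw [← hpow, add_pow]
    have hB : (0 : ℝ) ≤ 2 * (f x + f y) ^ n := by positivity
    have ha : ∀ i : ℕ, f (x ^ i * y ^ (n - i) * (n.choose i : k)) ≤ 2 * (f x + f y) ^ n := by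
      intro i
      rw [h_mul, h_mul, hpow, hpow]
      by_cases hi : i ≤ n
      · have h1 : f ((n.choose i : k)) ≤ 2 * (n.choose i : ℝ) := hnat _
        have h2 : (n.choose i : ℝ) * (f x ^ i * f y ^ (n - i)) ≤ (f x + f y) ^ n := by
          rw [add_pow]
          have h4 : f x ^ i * f y ^ (n - i) * (n.choose i : ℝ)
              ≤ ∑ j ∈ Finset.range (n + 1), f x ^ j * f y ^ (n - j) * (n.choose j : ℝ) :=
            Finset.single_le_sum
              (f := fun j => f x ^ j * f y ^ (n - j) * (n.choose j : ℝ))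
              (fun j _ => mul_nonneg (mul_nonneg (pow_nonneg (h_nonneg x) _)
                (pow_nonneg (h_nonneg y) _)) (Nat.cast_nonneg _))
              (Finset.mem_range.mpr (Nat.lt_succ_of_le hi))
          linarith
        have h3 : (0 : ℝ) ≤ f x ^ i * f y ^ (n - i) :=
          mul_nonneg (pow_nonneg (h_nonneg x) _) (pow_nonneg (h_nonneg y) _)
        calc f x ^ i * f y ^ (n - i) * f ((n.choose i : k))
            ≤ f x ^ i * f y ^ (n - i) * (2 * (n.choose i : ℝ)) := by
              exact mul_le_mul_of_nonneg_left h1 h3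
          _ = 2 * ((n.choose i : ℝ) * (f x ^ i * f y ^ (n - i))) := by ring
          _ ≤ 2 * (f x + f y) ^ n := by linarith
      · have : n.choose i = 0 := Nat.choose_eq_zero_of_lt (by omega)
        rw [this, Nat.cast_zero, hf0, mul_zero]
        exact hB
    have := keyn (n + 1) (fun i => x ^ i * y ^ (n - i) * (n.choose i : k))
      (2 * (f x + f y) ^ n) hB ha
    refine this.trans (le_of_eq ?_)
    push_cast
    try ring
  -- conclusion
  intro x y
  by_contra hcon
  push_neg at hcon
  have hxy : (0 : ℝ) ≤ f x + f y := by
    have := h_nonneg x; have := h_nonneg y; linarith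
  rcases eq_or_lt_of_le hxy with hA | hA
  · -- f x + f y = 0 forces x = y = 0
    have hx : f x = 0 := by have := h_nonneg x; have := h_nonneg y; linarith
    have hy : f y = 0 := by have := h_nonneg x; have := h_nonneg y; linarith
    rw [(h_eq x).mp hx, (h_eq y).mp hy] at hcon
    simp [hf0] at hcon
  · set A := f x + f y
    set r := f (x + y) / A with hr
    have hr1 : 1 < r := (one_lt_div hA).mpr hcon
    have hrpow : ∀ n : ℕ, r ^ n ≤ 4 * (n + 1) := by
      intro n
      have := hbin x y n
      rw [hr, div_pow]
      rw [div_le_iff₀ (by positivity)]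
      exact this
    -- contradiction: r^n grows faster
    set s := Real.sqrt r with hs
    have hs1 : 1 < s := by
      rw [hs]
      rw [show (1:ℝ) = Real.sqrt 1 by simp]
      exact Real.sqrt_lt_sqrt zero_le_one hr1
    have hs2 : s ^ 2 = r := Real.sq_sqrt (by linarith)
    have hse : 0 < s - 1 := by linarith
    obtain ⟨N, hN⟩ := exists_nat_gt (9 / (s - 1) ^ 2)
    have hN1 : 1 ≤ N := by
      by_contra h
      have : N = 0 := by omega
      subst this
      have : (0:ℝ) < 9 / (s - 1) ^ 2 := by positivity
      simp at hN
      linarith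
    have hNs : 9 < N * (s - 1) ^ 2 := by
      rw [div_lt_iff₀ (by positivity)] at hN
      linarith
    have hsN : (N : ℝ) * (s - 1) ≤ s ^ N := by
      have := one_add_mul_le_pow (a := s - 1) (by linarith) N
      have h0 : (1 : ℝ) + N * (s - 1) ≤ s ^ N := by
        rw [show (1:ℝ) + (s - 1) = s by ring] at this
        exact this
      linarith
    have hsNpos : (0:ℝ) ≤ (N:ℝ) * (s - 1) := by positivity
    have hrN : (N : ℝ) ^ 2 * (s - 1) ^ 2 ≤ r ^ N := by
      rw [← hs2, ← pow_mul, mul_comm 2 N, pow_mul]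
      calc (N : ℝ) ^ 2 * (s - 1) ^ 2 = ((N : ℝ) * (s - 1)) ^ 2 := by ring
        _ ≤ (s ^ N) ^ 2 := by
            apply pow_le_pow_left₀ hsNpos hsN
    have hNR : (1 : ℝ) ≤ (N : ℝ) := by exact_mod_cast hN1
    have : 4 * ((N : ℝ) + 1) < (N : ℝ) ^ 2 * (s - 1) ^ 2 := by
      have h1 : (N:ℝ) ^ 2 * (s - 1) ^ 2 = (N:ℝ) * ((N:ℝ) * (s - 1) ^ 2) := by ring
      rw [h1]
      have : 9 * (N:ℝ) ≤ (N:ℝ) * ((N:ℝ) * (s - 1) ^ 2) := by nlinarith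
      nlinarith
    have := hrpow N
    linarith
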